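/- arXiv:2206.01503 — 5 statements merged into one kernel-verified Lean document; each statement's English description precedes it below -/
import Mathlib

section
/- Let A_1 = [[0,1],[1,0]], A_2 = [[0,−i],[i,0]], A_3 = [[1,0],[0,−1]] be the Pauli matrices and A = (A_1, A_2, A_3). Then dist(A, C³ I)² > 2 = max_{‖x‖=1} var_x(A); in particular the distance formula dist(A, C^d I)² = sup var_x(A) fails for this commuting-free triple. -/
open Matrix

/-- The ℓ²-operator norm of a complex matrix. -/
noncomputable def matOpNorm {n : Type*} [Fintype n] [DecidableEq n]
    (M : Matrix n n ℂ) : ℝ :=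
  ‖Matrix.toEuclideanCLM (𝕜 := ℂ) M‖

/-- The norm `‖A‖ = ‖∑ⱼ Aⱼ* Aⱼ‖^{1/2}` of a tuple of matrices. -/
noncomputable def tupNorm {n : Type*} [Fintype n] [DecidableEq n] {d : ℕ}
    (A : Fin d → Matrix n n ℂ) : ℝ :=
  Real.sqrt (matOpNorm (∑ j, (A j)ᴴ * A j))

/-- The squared euclidean norm of a complex vector. -/
noncomputable def vecNormSq {n : Type*} [Fintype n] (y : n → ℂ) : ℝ := (star y ⬝ᵥ y).re

/-- `var_x(A) = ‖Ax‖² - ∑ⱼ |⟨x, Aⱼx⟩|²` for a tuple of matrices. -/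
noncomputable def matVar {n : Type*} [Fintype n] {d : ℕ}
    (A : Fin d → Matrix n n ℂ) (x : n → ℂ) : ℝ :=
  (∑ j, vecNormSq ((A j).mulVec x)) -
    ∑ j, ‖star x ⬝ᵥ (A j).mulVec x‖ ^ 2

theorem diag_le_opNorm' (M : Matrix (Fin 2) (Fin 2) ℂ) (x : Fin 2 → ℂ)
    (hx : ‖(WithLp.equiv 2 (Fin 2 → ℂ)).symm x‖ = 1) :
    (star x ⬝ᵥ M.mulVec x).re ≤ ‖Matrix.toEuclideanCLM (𝕜 := ℂ) M‖ := by
  set y := (WithLp.equiv 2 (Fin 2 → ℂ)).symm x with hy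
  have h1 : (inner ℂ y (Matrix.toEuclideanCLM (𝕜 := ℂ) M y) : ℂ) = star x ⬝ᵥ M.mulVec x := by
    rw [hy, WithLp.equiv_symm_apply, Matrix.toEuclideanCLM_toLp, EuclideanSpace.inner_toLp_toLp,
      dotProduct_comm]
  calc (star x ⬝ᵥ M.mulVec x).re ≤ ‖star x ⬝ᵥ M.mulVec x‖ := Complex.re_le_norm _
    _ = ‖(inner ℂ y (Matrix.toEuclideanCLM (𝕜 := ℂ) M y) : ℂ)‖ := by rw [h1]
    _ ≤ ‖y‖ * ‖Matrix.toEuclideanCLM (𝕜 := ℂ) M y‖ := norm_inner_le_norm _ _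
    _ ≤ ‖y‖ * (‖Matrix.toEuclideanCLM (𝕜 := ℂ) M‖ * ‖y‖) := by
        gcongr; exact (Matrix.toEuclideanCLM (𝕜 := ℂ) M).le_opNorm y
    _ = ‖Matrix.toEuclideanCLM (𝕜 := ℂ) M‖ := by rw [hx]; ring

theorem pauli_var (x : Fin 2 → ℂ) (hx : star x ⬝ᵥ x = 1) :
    matVar ![!![0, 1; 1, 0], !![0, -Complex.I; Complex.I, 0], !![1, 0; 0, -1]] x = 2 := by
  have h : (x 0).re^2 + (x 0).im^2 + ((x 1).re^2 + (x 1).im^2) = 1 := by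
    have := congrArg Complex.re hx
    simp [dotProduct, Fin.sum_univ_two, Complex.ext_iff] at this
    nlinarith [this]
  simp only [matVar, vecNormSq, Fin.sum_univ_three, Complex.sq_norm, Complex.normSq_apply]
  simp [mulVec, dotProduct, Fin.sum_univ_two, Complex.ext_iff]
  ring_nf
  nlinarith [h]

/-- for the Pauli triple `A = (σ₁, σ₂, σ₃)`, the maximum of
`var_x(A)` over unit vectors is `2`, while `dist(A, ℂ³I)² > 2`; so the distance
formula fails for this tuple. -/
theorem pauli_counterexample :
    let A : Fin 3 → Matrix (Fin 2) (Fin 2) ℂ :=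
      ![!![0, 1; 1, 0], !![0, -Complex.I; Complex.I, 0], !![1, 0; 0, -1]]
    IsGreatest {v : ℝ | ∃ x : Fin 2 → ℂ, star x ⬝ᵥ x = 1 ∧ v = matVar A x} 2 ∧
      (⨅ z : Fin 3 → ℂ,
          tupNorm (fun j => A j - z j • (1 : Matrix (Fin 2) (Fin 2) ℂ))) ^ 2 > 2 := by
  intro A
  have he0 : ‖(WithLp.equiv 2 (Fin 2 → ℂ)).symm ![1, 0]‖ = 1 := by
    rw [EuclideanSpace.norm_eq]; simp [Fin.sum_univ_two]
  have he1 : ‖(WithLp.equiv 2 (Fin 2 → ℂ)).symm ![0, 1]‖ = 1 := by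
    rw [EuclideanSpace.norm_eq]; simp [Fin.sum_univ_two]
  constructor
  · constructor
    · refine ⟨![1, 0], by simp [dotProduct, Fin.sum_univ_two], ?_⟩
      exact (pauli_var ![1, 0] (by simp [dotProduct, Fin.sum_univ_two])).symm
    · rintro v ⟨x, hx, rfl⟩
      exact le_of_eq (pauli_var x hx)
  · have hlb : ∀ z : Fin 3 → ℂ,
        Real.sqrt 3 ≤ tupNorm (fun j => A j - z j • (1 : Matrix (Fin 2) (Fin 2) ℂ)) := by
      intro z
      apply Real.sqrt_le_sqrt
      set M := ∑ j, (A j - z j • (1 : Matrix (Fin 2) (Fin 2) ℂ))ᴴ *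
        (A j - z j • (1 : Matrix (Fin 2) (Fin 2) ℂ)) with hM
      have hsum : (star (![1,0] : Fin 2 → ℂ) ⬝ᵥ M.mulVec ![1,0]).re
          + (star (![0,1] : Fin 2 → ℂ) ⬝ᵥ M.mulVec ![0,1]).re ≥ 6 := by
        simp [hM, A, Matrix.sum_apply, mulVec, dotProduct, Fin.sum_univ_three,
          Fin.sum_univ_two, Matrix.mul_apply, Matrix.one_apply, Complex.ext_iff]
        ring_nf
        nlinarith [sq_nonneg ((z 0).re), sq_nonneg ((z 0).im), sq_nonneg ((z 1).re),
          sq_nonneg ((z 1).im), sq_nonneg ((z 2).re), sq_nonneg ((z 2).im)]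
      have h0 := diag_le_opNorm' M ![1,0] he0
      have h1 := diag_le_opNorm' M ![0,1] he1
      have : (3 : ℝ) ≤ matOpNorm M := by
        unfold matOpNorm; linarith
      exact this
    have hge : Real.sqrt 3 ≤ ⨅ z : Fin 3 → ℂ,
        tupNorm (fun j => A j - z j • (1 : Matrix (Fin 2) (Fin 2) ℂ)) := le_ciInf hlb
    have hsq : (Real.sqrt 3) ^ 2 ≤ (⨅ z : Fin 3 → ℂ,
        tupNorm (fun j => A j - z j • (1 : Matrix (Fin 2) (Fin 2) ℂ))) ^ 2 :=
      pow_le_pow_left₀ (Real.sqrt_nonneg 3) hge 2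
    rw [Real.sq_sqrt (by norm_num : (3:ℝ) ≥ 0)] at hsq
    linarith
end

section
/- Let A = (A_1, A_2) with A_1 = [[0,1],[0,0]] and A_2 = [[1,0],[0,−1]]. Then dist(A, C² I)² ≥ 3/2 while max_{‖x‖=1} var_x(A) = 4/3; hence dist(A, C² I)² > max_{‖x‖=1} var_x(A). -/
open Matrix

open scoped ComplexInnerProductSpace

lemma diag_re_le_matOpNorm {n : Type*} [Fintype n] [DecidableEq n]
    (M : Matrix n n ℂ) (i : n) : (M i i).re ≤ matOpNorm M := by
  set T := Matrix.toEuclideanCLM (𝕜 := ℂ) M with hT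
  set e : EuclideanSpace ℂ n := EuclideanSpace.single i (1 : ℂ) with he
  have hnorm : ‖e‖ = 1 := by simp [he]
  have hTe : T e = (WithLp.equiv 2 (n → ℂ)).symm (Matrix.toLin' M (Pi.single i 1)) := by
    rw [he, hT]; rfl
  have hinner : ⟪e, T e⟫ = M i i := by
    rw [he, EuclideanSpace.inner_single_left, hTe]
    simp [Matrix.toLin'_apply, Matrix.mulVec_single, WithLp.equiv_symm_apply]
  have h1 : (M i i).re ≤ ‖(M i i : ℂ)‖ := Complex.re_le_norm _
  have h2 : ‖(M i i : ℂ)‖ ≤ ‖T‖ := by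
    rw [← hinner]
    calc ‖⟪e, T e⟫‖ ≤ ‖e‖ * ‖T e‖ := norm_inner_le_norm _ _
    _ ≤ ‖e‖ * (‖T‖ * ‖e‖) := by gcongr; exact T.le_opNorm e
    _ = ‖T‖ := by rw [hnorm]; ring
  exact h1.trans h2

lemma matVar_formula (x : Fin 2 → ℂ) :
    matVar ![!![0, 1; 0, 0], !![1, 0; 0, -1]] x =
      Complex.normSq (x 1) + (Complex.normSq (x 0) + Complex.normSq (x 1)) -
        Complex.normSq (x 0) * Complex.normSq (x 1) -
        (Complex.normSq (x 0) - Complex.normSq (x 1)) ^ 2 := by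
  have m1 : (!![0, (1:ℂ); 0, 0]).mulVec x = ![x 1, 0] := by
    funext i
    fin_cases i <;> simp [Matrix.mulVec, dotProduct, Fin.sum_univ_two]
  have m2 : (!![(1:ℂ), 0; 0, -1]).mulVec x = ![x 0, -(x 1)] := by
    funext i
    fin_cases i <;> simp [Matrix.mulVec, dotProduct, Fin.sum_univ_two]
  have hVar : matVar ![!![0, 1; 0, 0], !![1, 0; 0, -1]] x =
      vecNormSq ![x 1, 0] + vecNormSq ![x 0, -(x 1)] -
        (‖star x ⬝ᵥ ![x 1, 0]‖ ^ 2 + ‖star x ⬝ᵥ ![x 0, -(x 1)]‖ ^ 2) := by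
    rw [matVar, Fin.sum_univ_two, Fin.sum_univ_two]
    rw [show ((![!![0, 1; 0, 0], !![1, 0; 0, -1]] : Fin 2 → Matrix (Fin 2) (Fin 2) ℂ) 0) = !![0, (1:ℂ); 0, 0] from rfl,
      show ((![!![0, 1; 0, 0], !![1, 0; 0, -1]] : Fin 2 → Matrix (Fin 2) (Fin 2) ℂ) 1) = !![(1:ℂ), 0; 0, -1] from rfl,
      m1, m2]
    try ring
  rw [hVar]
  have e1 : vecNormSq ![x 1, 0] = Complex.normSq (x 1) := by
    simp [vecNormSq, dotProduct, Fin.sum_univ_two, Complex.normSq_apply,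
      Complex.mul_re, Complex.add_re]
    try ring
  have e2 : vecNormSq ![x 0, -(x 1)] = Complex.normSq (x 0) + Complex.normSq (x 1) := by
    simp [vecNormSq, dotProduct, Fin.sum_univ_two, Complex.normSq_apply,
      Complex.mul_re, Complex.add_re]
    try ring
  have e3 : ‖star x ⬝ᵥ ![x 1, 0]‖ ^ 2 =
      Complex.normSq (x 0) * Complex.normSq (x 1) := by
    have : (star x ⬝ᵥ ![x 1, 0]) = (starRingEnd ℂ) (x 0) * x 1 := by
      simp [dotProduct, Fin.sum_univ_two]
    rw [this, Complex.sq_norm, Complex.normSq_mul, Complex.normSq_conj]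
  have e4 : ‖star x ⬝ᵥ ![x 0, -(x 1)]‖ ^ 2 =
      (Complex.normSq (x 0) - Complex.normSq (x 1)) ^ 2 := by
    have : (star x ⬝ᵥ ![x 0, -(x 1)]) =
        ((Complex.normSq (x 0) - Complex.normSq (x 1) : ℝ) : ℂ) := by
      simp [dotProduct, Fin.sum_univ_two, Complex.normSq_eq_conj_mul_self]
      ring
    rw [this, Complex.sq_norm, Complex.normSq_ofReal]
    exact sq (Complex.normSq (x 0) - Complex.normSq (x 1)) ▸ rfl
  rw [e1, e2, e3, e4]
  ring

/-- for `A = ([[0,1],[0,0]], [[1,0],[0,-1]])`, one has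
`dist(A, ℂ²I)² ≥ 3/2` while `max_{‖x‖=1} var_x(A) = 4/3`; in particular
`dist(A, ℂ²I)² > max_{‖x‖=1} var_x(A)`. -/
theorem two_by_two_counterexample :
    let A : Fin 2 → Matrix (Fin 2) (Fin 2) ℂ := ![!![0, 1; 0, 0], !![1, 0; 0, -1]]
    (⨅ z : Fin 2 → ℂ,
        tupNorm (fun j => A j - z j • (1 : Matrix (Fin 2) (Fin 2) ℂ))) ^ 2 ≥ 3 / 2 ∧
      IsGreatest {v : ℝ | ∃ x : Fin 2 → ℂ, star x ⬝ᵥ x = 1 ∧ v = matVar A x} (4 / 3) ∧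
      (⨅ z : Fin 2 → ℂ,
          tupNorm (fun j => A j - z j • (1 : Matrix (Fin 2) (Fin 2) ℂ))) ^ 2 >
        sSup {v : ℝ | ∃ x : Fin 2 → ℂ, star x ⬝ᵥ x = 1 ∧ v = matVar A x} := by
  intro A
  -- part 1 : infimum lower bound
  have key : ∀ z : Fin 2 → ℂ,
      3 / 2 ≤ matOpNorm (∑ j, (A j - z j • (1 : Matrix (Fin 2) (Fin 2) ℂ))ᴴ *
        (A j - z j • (1 : Matrix (Fin 2) (Fin 2) ℂ))) := by
    intro z
    set M := ∑ j, (A j - z j • (1 : Matrix (Fin 2) (Fin 2) ℂ))ᴴ *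
        (A j - z j • (1 : Matrix (Fin 2) (Fin 2) ℂ)) with hM
    have h0 := diag_re_le_matOpNorm M 0
    have h1 := diag_re_le_matOpNorm M 1
    have h00 : M 0 0 = (starRingEnd ℂ) (z 0) * z 0 +
        (1 - (starRingEnd ℂ) (z 1)) * (1 - z 1) := by
      simp [hM, A, Matrix.sum_apply, Matrix.mul_apply, Fin.sum_univ_two,
        Matrix.conjTranspose_apply, Matrix.sub_apply, Matrix.smul_apply, Matrix.one_apply]
      try ring
    have h11 : M 1 1 = 1 + (starRingEnd ℂ) (z 0) * z 0 +
        (1 + (starRingEnd ℂ) (z 1)) * (1 + z 1) := by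
      simp [hM, A, Matrix.sum_apply, Matrix.mul_apply, Fin.sum_univ_two,
        Matrix.conjTranspose_apply, Matrix.sub_apply, Matrix.smul_apply, Matrix.one_apply]
      try ring
    have hsum : 3 ≤ (M 0 0).re + (M 1 1).re := by
      rw [h00, h11]
      simp only [Complex.add_re, Complex.sub_re, Complex.mul_re, Complex.mul_im,
        Complex.sub_im, Complex.add_im, Complex.one_re, Complex.one_im, Complex.conj_re,
        Complex.conj_im]
      nlinarith [sq_nonneg ((z 0).re), sq_nonneg ((z 0).im), sq_nonneg ((z 1).re),
        sq_nonneg ((z 1).im)]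
    linarith
  have hinf : Real.sqrt (3 / 2) ≤
      ⨅ z : Fin 2 → ℂ, tupNorm (fun j => A j - z j • (1 : Matrix (Fin 2) (Fin 2) ℂ)) := by
    apply le_ciInf
    intro z
    exact Real.sqrt_le_sqrt (key z)
  have hpart1 : (⨅ z : Fin 2 → ℂ,
      tupNorm (fun j => A j - z j • (1 : Matrix (Fin 2) (Fin 2) ℂ))) ^ 2 ≥ 3 / 2 := by
    have h := pow_le_pow_left₀ (Real.sqrt_nonneg (3 / 2)) hinf 2
    rwa [Real.sq_sqrt (by norm_num : (3:ℝ)/2 ≥ 0)] at h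
  -- part 2 : IsGreatest
  have hgreat : IsGreatest {v : ℝ | ∃ x : Fin 2 → ℂ, star x ⬝ᵥ x = 1 ∧ v = matVar A x}
      (4 / 3) := by
    constructor
    · refine ⟨![(Real.sqrt (1/3) : ℝ), (Real.sqrt (2/3) : ℝ)], ?_, ?_⟩
      · simp only [dotProduct, Fin.sum_univ_two, Pi.star_apply, Matrix.cons_val_zero,
          Matrix.cons_val_one, Matrix.head_cons, RCLike.star_def, Complex.conj_ofReal]
        push_cast
        rw [← Complex.ofReal_mul, ← Complex.ofReal_mul,
          Real.mul_self_sqrt (by norm_num), Real.mul_self_sqrt (by norm_num)]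
        norm_num
      · rw [show (A : Fin 2 → Matrix (Fin 2) (Fin 2) ℂ) = ![!![0, 1; 0, 0], !![1, 0; 0, -1]] from rfl,
          matVar_formula]
        simp only [Matrix.cons_val_zero, Matrix.cons_val_one, Matrix.head_cons,
          Complex.normSq_ofReal]
        rw [Real.mul_self_sqrt (by norm_num), Real.mul_self_sqrt (by norm_num)]
        norm_num
    · rintro v ⟨x, hx, rfl⟩
      have hre : Complex.normSq (x 0) + Complex.normSq (x 1) = 1 := by
        have := congrArg Complex.re hx
        simpa [dotProduct, Fin.sum_univ_two, Complex.normSq_apply, Complex.mul_re,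
          Complex.add_re] using this
      rw [show (A : Fin 2 → Matrix (Fin 2) (Fin 2) ℂ) = ![!![0, 1; 0, 0], !![1, 0; 0, -1]] from rfl,
        matVar_formula]
      set s := Complex.normSq (x 0)
      set t := Complex.normSq (x 1)
      nlinarith [sq_nonneg (3 * t - 2), Complex.normSq_nonneg (x 0), Complex.normSq_nonneg (x 1)]
  refine ⟨hpart1, hgreat, ?_⟩
  rw [hgreat.csSup_eq]
  linarith
end

section
/- Let A be a tuple of bounded operators on H, z⁰ the minimizer of ‖A − zI‖ over z ∈ C^d, and A⁰ = A − z⁰I. Then dist(A, C^d I)² = sup_{‖x‖=1} var_x(A) holds if and only if 0 ∈ W₀(A⁰), i.e. there is a sequence of unit vectors x_n with ‖A⁰ x_n‖ → ‖A⁰‖ and ⟨x_n, A_j⁰ x_n⟩ → 0 for all j. -/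
open Filter Topology

set_option synthInstance.maxHeartbeats 1000000
set_option maxHeartbeats 1000000

variable {H : Type*} [NormedAddCommGroup H] [InnerProductSpace ℂ H] [CompleteSpace H]

/-- The norm `‖A‖ = ‖∑ⱼ Aⱼ* Aⱼ‖^{1/2}` of a tuple of operators viewed as an operator
`H → H^d`. -/
noncomputable def opTupNorm {d : ℕ} (A : Fin d → H →L[ℂ] H) : ℝ :=
  Real.sqrt ‖∑ j, ContinuousLinearMap.adjoint (A j) * A j‖

/-- `var_x(A) = ‖Ax‖² - ∑ⱼ |⟨x, Aⱼx⟩|²`. -/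
noncomputable def opVar {d : ℕ} (A : Fin d → H →L[ℂ] H) (x : H) : ℝ :=
  (∑ j, ‖A j x‖ ^ 2) - ∑ j, ‖(inner ℂ x (A j x) : ℂ)‖ ^ 2

/-- The joint maximal numerical range `W₀(A)`: all limits of
`(⟨xₙ, A₁xₙ⟩, …, ⟨xₙ, A_d xₙ⟩)` along sequences of unit vectors `xₙ` with
`‖A xₙ‖ → ‖A‖`. -/
def W0 {d : ℕ} (A : Fin d → H →L[ℂ] H) : Set (Fin d → ℂ) :=
  {lam | ∃ x : ℕ → H, (∀ n, ‖x n‖ = 1) ∧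
    Tendsto (fun n => Real.sqrt (∑ j, ‖A j (x n)‖ ^ 2)) atTop (nhds (opTupNorm A)) ∧
    ∀ j, Tendsto (fun n => (inner ℂ (x n) (A j (x n)) : ℂ)) atTop (nhds (lam j))}

noncomputable instance piLpCompleteSpace {d : ℕ} :
    CompleteSpace (PiLp 2 fun _ : Fin d => H) :=
  inferInstance

/-- The tuple of operators as a single operator into the ℓ²-direct sum. -/
noncomputable def tupOp {d : ℕ} (A : Fin d → H →L[ℂ] H) :
    H →L[ℂ] (PiLp 2 fun _ : Fin d => H) :=
  (PiLp.continuousLinearEquiv 2 ℂ (fun _ : Fin d => H)).symm.toContinuousLinearMap ∘L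
    ContinuousLinearMap.pi A

lemma tupOp_apply {d : ℕ} (A : Fin d → H →L[ℂ] H) (x : H) (j : Fin d) :
    tupOp A x j = A j x := rfl

lemma norm_tupOp_sq {d : ℕ} (A : Fin d → H →L[ℂ] H) (x : H) :
    ‖tupOp A x‖ ^ 2 = ∑ j, ‖A j x‖ ^ 2 := by
  rw [PiLp.norm_sq_eq_of_L2]
  rfl

lemma adjoint_comp_tupOp {d : ℕ} (A : Fin d → H →L[ℂ] H) :
    ContinuousLinearMap.adjoint (tupOp A) ∘L tupOp A
      = ∑ j, ContinuousLinearMap.adjoint (A j) * A j := by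
  ext y
  refine ext_inner_left ℂ fun x => ?_
  rw [ContinuousLinearMap.comp_apply, ContinuousLinearMap.adjoint_inner_right]
  rw [PiLp.inner_apply]
  rw [ContinuousLinearMap.sum_apply, inner_sum]
  refine Finset.sum_congr rfl fun j _ => ?_
  rw [tupOp_apply, tupOp_apply, ContinuousLinearMap.mul_apply,
    ContinuousLinearMap.adjoint_inner_right]

lemma opTupNorm_eq_norm {d : ℕ} (A : Fin d → H →L[ℂ] H) :
    opTupNorm A = ‖tupOp A‖ := by
  rw [opTupNorm, ← adjoint_comp_tupOp, ContinuousLinearMap.norm_adjoint_comp_self,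
    Real.sqrt_mul_self (norm_nonneg _)]

lemma sum_sq_le_opTupNorm_sq {d : ℕ} (A : Fin d → H →L[ℂ] H) {x : H} (hx : ‖x‖ = 1) :
    ∑ j, ‖A j x‖ ^ 2 ≤ opTupNorm A ^ 2 := by
  rw [← norm_tupOp_sq, opTupNorm_eq_norm]
  have h := (tupOp A).le_opNorm x
  rw [hx, mul_one] at h
  exact pow_le_pow_left₀ (norm_nonneg _) h 2

lemma exists_norming_seq [Nontrivial H] {d : ℕ} (A : Fin d → H →L[ℂ] H) :
    ∃ x : ℕ → H, (∀ n, ‖x n‖ = 1) ∧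
      Tendsto (fun n => ∑ j, ‖A j (x n)‖ ^ 2) atTop (nhds (opTupNorm A ^ 2)) := by
  obtain ⟨y, hy⟩ := exists_ne (0 : H)
  set B := tupOp A with hB
  rcases eq_or_lt_of_le (norm_nonneg B) with h0 | h0
  · refine ⟨fun _ => ‖y‖⁻¹ • y, fun _ => norm_smul_inv_norm hy, ?_⟩
    have hz : ∀ u : H, ∑ j, ‖A j u‖ ^ 2 = 0 := by
      intro u
      rw [← norm_tupOp_sq]
      have h := (tupOp A).le_opNorm u
      rw [← hB, ← h0, zero_mul] at h
      have h2 : ‖tupOp A u‖ = 0 := le_antisymm h (norm_nonneg _)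
      rw [h2]; ring
    have hn : opTupNorm A ^ 2 = 0 := by
      rw [opTupNorm_eq_norm, ← hB, ← h0]; ring
    rw [hn]
    have he : (fun _ : ℕ => ∑ j, ‖A j (‖y‖⁻¹ • y)‖ ^ 2) = fun _ : ℕ => (0 : ℝ) :=
      funext fun _ => hz _
    rw [he]
    exact tendsto_const_nhds
  · have key : ∀ n : ℕ, ∃ u : H, ‖u‖ = 1 ∧ ‖B‖ * (1 - 1 / (n + 1)) < ‖B u‖ := by
      intro n
      have hfrac : 0 < 1 / ((n : ℝ) + 1) := by positivity
      have hfrac1 : 1 / ((n : ℝ) + 1) ≤ 1 := by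
        rw [div_le_one (by positivity)]
        linarith [Nat.cast_nonneg (α := ℝ) n]
      have hc : ‖B‖ * (1 - 1 / (n + 1)) < ‖B‖ := by nlinarith
      have hcnn : 0 ≤ ‖B‖ * (1 - 1 / ((n : ℝ) + 1)) := by nlinarith
      obtain ⟨v, hv1, hv2⟩ := B.exists_lt_apply_of_lt_opNorm hc
      have hv0 : v ≠ 0 := by
        intro h
        rw [h] at hv2
        simp only [map_zero, norm_zero] at hv2
        linarith
      refine ⟨‖v‖⁻¹ • v, norm_smul_inv_norm hv0, ?_⟩
      have hvpos : 0 < ‖v‖ := norm_pos_iff.mpr hv0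
      have hBsmul : ‖B (‖v‖⁻¹ • v)‖ = ‖v‖⁻¹ * ‖B v‖ := by
        rw [B.map_smul_of_tower, norm_smul, norm_inv, norm_norm]
      rw [hBsmul]
      have hinv : 1 ≤ ‖v‖⁻¹ := (one_le_inv₀ hvpos).mpr hv1.le
      calc ‖B‖ * (1 - 1 / (n + 1)) < ‖B v‖ := hv2
        _ = 1 * ‖B v‖ := (one_mul _).symm
        _ ≤ ‖v‖⁻¹ * ‖B v‖ := by
            exact mul_le_mul_of_nonneg_right hinv (norm_nonneg _)
    choose u hu1 hu2 using key
    have hlow : Tendsto (fun n : ℕ => ‖B‖ * (1 - 1 / (n + 1))) atTop (nhds ‖B‖) := by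
      have h1 : Tendsto (fun n : ℕ => 1 / ((n : ℝ) + 1)) atTop (nhds 0) :=
        tendsto_one_div_add_atTop_nhds_zero_nat
      have h2 : Tendsto (fun n : ℕ => ‖B‖ * (1 - 1 / ((n : ℝ) + 1))) atTop
          (nhds (‖B‖ * (1 - 0))) :=
        tendsto_const_nhds.mul (tendsto_const_nhds.sub h1)
      simpa using h2
    have hnorm : Tendsto (fun n => ‖B (u n)‖) atTop (nhds ‖B‖) := by
      refine tendsto_of_tendsto_of_tendsto_of_le_of_le hlow tendsto_const_nhds
        (fun n => (hu2 n).le) (fun n => ?_)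
      exact B.unit_le_opNorm (u n) (hu1 n).le
    refine ⟨u, hu1, ?_⟩
    have hsq := hnorm.pow 2
    have he : (fun n => ‖B (u n)‖ ^ 2) = fun n => ∑ j, ‖A j (u n)‖ ^ 2 := by
      funext n; rw [← norm_tupOp_sq]
    rw [he] at hsq
    rw [opTupNorm_eq_norm]
    exact hsq

lemma opVar_shift {d : ℕ} (A : Fin d → H →L[ℂ] H) (z : Fin d → ℂ) {x : H} (hx : ‖x‖ = 1) :
    opVar (fun j => A j - z j • (1 : H →L[ℂ] H)) x = opVar A x := by
  unfold opVar
  rw [← Finset.sum_sub_distrib, ← Finset.sum_sub_distrib]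
  refine Finset.sum_congr rfl fun j _ => ?_
  set T := A j
  set w := z j
  have hxx : (inner ℂ x x : ℂ) = 1 := by
    rw [inner_self_eq_norm_sq_to_K, hx]
    norm_num
  have e1 : (T - w • (1 : H →L[ℂ] H)) x = T x - w • x := by
    simp [ContinuousLinearMap.sub_apply, ContinuousLinearMap.smul_apply]
  have e2 : (inner ℂ x ((T - w • (1 : H →L[ℂ] H)) x) : ℂ) = inner ℂ x (T x) - w := by
    rw [e1, inner_sub_right, inner_smul_right, hxx, mul_one]

  have h1 : ‖T x - w • x‖ ^ 2
      = ‖T x‖ ^ 2 - 2 * (w * (starRingEnd ℂ) (inner ℂ x (T x))).re + ‖w‖ ^ 2 := by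
    have h := @norm_sub_sq ℂ _ _ _ _ (T x) (w • x)
    rw [inner_smul_right, ← inner_conj_symm (T x) x] at h
    rw [norm_smul, hx, mul_one] at h
    simpa using h
  have h2 : ‖(inner ℂ x (T x) : ℂ) - w‖ ^ 2
      = ‖(inner ℂ x (T x) : ℂ)‖ ^ 2
        - 2 * (w * (starRingEnd ℂ) (inner ℂ x (T x))).re + ‖w‖ ^ 2 := by
    simp only [Complex.sq_norm, Complex.normSq_apply, Complex.sub_re, Complex.sub_im,
      Complex.mul_re, Complex.mul_im, Complex.conj_re, Complex.conj_im]
    ring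
  rw [e2, e1, h1, h2]
  ring

/-- with `z⁰` the minimizer of `‖A - zI‖` and `A⁰ = A - z⁰I`, the
distance formula `dist(A, ℂᵈI)² = sup_{‖x‖=1} var_x(A)` holds iff `0 ∈ W₀(A⁰)`. -/
theorem dist_formula_iff_zero_mem_W0 [Nontrivial H]
    {d : ℕ} (A : Fin d → H →L[ℂ] H) (z0 : Fin d → ℂ)
    (hz0 : ∀ z : Fin d → ℂ,
      opTupNorm (fun j => A j - z0 j • (1 : H →L[ℂ] H)) ≤
        opTupNorm (fun j => A j - z j • (1 : H →L[ℂ] H))) :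
    (sSup {v : ℝ | ∃ x : H, ‖x‖ = 1 ∧ v = opVar A x} =
        (⨅ z : Fin d → ℂ, opTupNorm (fun j => A j - z j • (1 : H →L[ℂ] H))) ^ 2) ↔
      (0 : Fin d → ℂ) ∈ W0 (fun j => A j - z0 j • (1 : H →L[ℂ] H)) := by
  set A0 : Fin d → H →L[ℂ] H := fun j => A j - z0 j • (1 : H →L[ℂ] H) with hA0
  set N : ℝ := opTupNorm A0 with hN
  have hN0 : 0 ≤ N := Real.sqrt_nonneg _
  have hInf : (⨅ z : Fin d → ℂ, opTupNorm (fun j => A j - z j • (1 : H →L[ℂ] H))) = N := by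
    refine le_antisymm (ciInf_le ⟨0, ?_⟩ z0) (le_ciInf hz0)
    rintro v ⟨z, rfl⟩
    exact Real.sqrt_nonneg _
  set S := {v : ℝ | ∃ x : H, ‖x‖ = 1 ∧ v = opVar A x} with hS
  have hSne : S.Nonempty := by
    obtain ⟨y, hy⟩ := exists_ne (0 : H)
    exact ⟨opVar A (‖y‖⁻¹ • y), ⟨_, norm_smul_inv_norm hy, rfl⟩⟩
  have hvar : ∀ x : H, ‖x‖ = 1 →
      opVar A x = (∑ j, ‖A0 j x‖ ^ 2) - ∑ j, ‖(inner ℂ x (A0 j x) : ℂ)‖ ^ 2 := by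
    intro x hx
    rw [← opVar_shift A z0 hx]
    rfl
  have hub : ∀ v ∈ S, v ≤ N ^ 2 := by
    rintro v ⟨x, hx, rfl⟩
    rw [hvar x hx]
    have h1 := sum_sq_le_opTupNorm_sq A0 hx
    have h2 : 0 ≤ ∑ j, ‖(inner ℂ x (A0 j x) : ℂ)‖ ^ 2 :=
      Finset.sum_nonneg fun j _ => sq_nonneg _
    rw [← hN] at h1
    linarith
  have hbdd : BddAbove S := ⟨N ^ 2, hub⟩
  rw [hInf]
  constructor
  · intro hsup
    have hseq : ∀ n : ℕ, ∃ x : H, ‖x‖ = 1 ∧ N ^ 2 - 1 / (n + 1) < opVar A x := by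
      intro n
      have hpos : (0 : ℝ) < 1 / (n + 1) := by positivity
      have h : N ^ 2 - 1 / (n + 1) < sSup S := by rw [hsup]; linarith
      obtain ⟨v, hvS, hv⟩ := exists_lt_of_lt_csSup hSne h
      obtain ⟨x, hx, rfl⟩ := hvS
      exact ⟨x, hx, hv⟩
    choose x hx1 hx2 using hseq
    have hle : ∀ n, opVar A (x n) ≤ N ^ 2 := fun n => hub _ ⟨x n, hx1 n, rfl⟩
    have hvlim : Tendsto (fun n => opVar A (x n)) atTop (nhds (N ^ 2)) := by
      refine tendsto_of_tendsto_of_tendsto_of_le_of_le ?_ tendsto_const_nhds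
        (fun n => (hx2 n).le) hle
      have h1 : Tendsto (fun n : ℕ => 1 / ((n : ℝ) + 1)) atTop (nhds 0) :=
        tendsto_one_div_add_atTop_nhds_zero_nat
      simpa using tendsto_const_nhds.sub h1
    set s : ℕ → ℝ := fun n => ∑ j, ‖A0 j (x n)‖ ^ 2 with hs
    set t : ℕ → ℝ := fun n => ∑ j, ‖(inner ℂ (x n) (A0 j (x n)) : ℂ)‖ ^ 2 with ht
    have hst : ∀ n, opVar A (x n) = s n - t n := fun n => hvar _ (hx1 n)
    have hsle : ∀ n, s n ≤ N ^ 2 := by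
      intro n
      have := sum_sq_le_opTupNorm_sq A0 (hx1 n)
      rw [← hN] at this
      exact this
    have htnn : ∀ n, 0 ≤ t n := fun n => Finset.sum_nonneg fun j _ => sq_nonneg _
    have hslim : Tendsto s atTop (nhds (N ^ 2)) := by
      refine tendsto_of_tendsto_of_tendsto_of_le_of_le hvlim tendsto_const_nhds
        (fun n => ?_) hsle
      have h1 := hst n
      have h2 := htnn n
      linarith
    have htlim : Tendsto t atTop (nhds 0) := by
      have h := hslim.sub hvlim
      have he : (fun n => s n - opVar A (x n)) = t := by
        funext n; rw [hst n]; ring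
      rw [he] at h
      simpa using h
    refine ⟨x, hx1, ?_, ?_⟩
    · have h := hslim.sqrt
      rw [Real.sqrt_sq hN0] at h
      exact h
    · intro j
      have habs : Tendsto (fun n => ‖(inner ℂ (x n) (A0 j (x n)) : ℂ)‖ ^ 2)
          atTop (nhds 0) := by
        refine tendsto_of_tendsto_of_tendsto_of_le_of_le tendsto_const_nhds htlim
          (fun n => sq_nonneg _) (fun n => ?_)
        exact Finset.single_le_sum
          (f := fun i : Fin d => ‖(inner ℂ (x n) (A0 i (x n)) : ℂ)‖ ^ 2)
          (fun i _ => sq_nonneg _) (Finset.mem_univ j)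
      have h := habs.sqrt
      rw [Real.sqrt_zero] at h
      have he : (fun n => Real.sqrt (‖(inner ℂ (x n) (A0 j (x n)) : ℂ)‖ ^ 2))
          = fun n => ‖(inner ℂ (x n) (A0 j (x n)) : ℂ)‖ := by
        funext n; exact Real.sqrt_sq (norm_nonneg _)
      rw [he] at h
      have : Tendsto (fun n => (inner ℂ (x n) (A0 j (x n)) : ℂ)) atTop (nhds 0) := by
        rw [tendsto_zero_iff_norm_tendsto_zero]
        simpa using h
      simpa using this
  · rintro ⟨x, hx1, hx2, hx3⟩
    refine le_antisymm (csSup_le hSne hub) ?_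
    have hslim : Tendsto (fun n => ∑ j, ‖A0 j (x n)‖ ^ 2) atTop (nhds (N ^ 2)) := by
      have h := hx2.pow 2
      have he : (fun n => Real.sqrt (∑ j, ‖A0 j (x n)‖ ^ 2) ^ 2)
          = fun n => ∑ j, ‖A0 j (x n)‖ ^ 2 := by
        funext n
        exact Real.sq_sqrt (Finset.sum_nonneg fun j _ => sq_nonneg _)
      rw [he] at h
      exact h
    have htlim : Tendsto (fun n => ∑ j, ‖(inner ℂ (x n) (A0 j (x n)) : ℂ)‖ ^ 2)
        atTop (nhds 0) := by
      have hj : ∀ j : Fin d, Tendsto (fun n => ‖(inner ℂ (x n) (A0 j (x n)) : ℂ)‖ ^ 2)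
          atTop (nhds 0) := by
        intro j
        have h := ((hx3 j).norm).pow 2
        simpa using h
      have h := tendsto_finset_sum (Finset.univ : Finset (Fin d)) (fun j _ => hj j)
      simpa using h
    have hvlim : Tendsto (fun n => opVar A (x n)) atTop (nhds (N ^ 2)) := by
      have h := hslim.sub htlim
      have he : (fun n => (∑ j, ‖A0 j (x n)‖ ^ 2)
          - ∑ j, ‖(inner ℂ (x n) (A0 j (x n)) : ℂ)‖ ^ 2)
          = fun n => opVar A (x n) := by
        funext n
        exact (hvar _ (hx1 n)).symm
      rw [he] at h
      simpa using h
    exact le_of_tendsto hvlim (Eventually.of_forall fun n => le_csSup hbdd ⟨x n, hx1 n, rfl⟩)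
end

section
/- If 0 ∈ W₀(A), i.e. there exist unit vectors x_n with ‖Ax_n‖ → ‖A‖ and ⟨x_n, A_j x_n⟩ → 0 for all j, then for every z ∈ C^d, ‖A − zI‖² ≥ ‖A‖² + ‖z‖². -/
open Filter Topology

variable {H : Type*} [NormedAddCommGroup H] [InnerProductSpace ℂ H] [CompleteSpace H]

lemma aux_sum_sq_le {d : ℕ} (B : Fin d → H →L[ℂ] H) (x : H) (hx : ‖x‖ = 1) :
    ∑ j, ‖B j x‖ ^ 2 ≤ opTupNorm B ^ 2 := by
  have hsq : opTupNorm B ^ 2 = ‖∑ j, ContinuousLinearMap.adjoint (B j) * B j‖ :=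
    Real.sq_sqrt (norm_nonneg _)
  set T := ∑ j, ContinuousLinearMap.adjoint (B j) * B j with hT
  have h1 : (∑ j, ‖B j x‖ ^ 2 : ℝ) = Complex.re (inner ℂ x (T x)) := by
    rw [hT, ContinuousLinearMap.sum_apply, inner_sum, Complex.re_sum]
    refine Finset.sum_congr rfl fun j _ => ?_
    rw [ContinuousLinearMap.mul_apply, ContinuousLinearMap.adjoint_inner_right]
    exact (inner_self_eq_norm_sq (𝕜 := ℂ) _).symm
  rw [hsq, h1]
  calc Complex.re (inner ℂ x (T x)) ≤ ‖(inner ℂ x (T x) : ℂ)‖ := Complex.re_le_norm _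
    _ ≤ ‖x‖ * ‖T x‖ := by
        simpa using norm_inner_le_norm (𝕜 := ℂ) x (T x)
    _ ≤ ‖x‖ * (‖T‖ * ‖x‖) := by
        exact mul_le_mul_of_nonneg_left (T.le_opNorm x) (norm_nonneg _)
    _ = ‖T‖ := by rw [hx]; ring

/-- if `0 ∈ W₀(A)`, i.e. there are unit vectors `xₙ` with
`‖Axₙ‖ → ‖A‖` and `⟨xₙ, Aⱼxₙ⟩ → 0` for all `j`, then for every `z ∈ ℂᵈ`,
`‖A - zI‖² ≥ ‖A‖² + ‖z‖²`. -/
theorem norm_sub_sq_ge_of_zero_mem_W0 {d : ℕ} (A : Fin d → H →L[ℂ] H)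
    (x : ℕ → H) (hx : ∀ n, ‖x n‖ = 1)
    (hnorm : Tendsto (fun n => Real.sqrt (∑ j, ‖A j (x n)‖ ^ 2)) atTop
      (nhds (opTupNorm A)))
    (hinner : ∀ j, Tendsto (fun n => (inner ℂ (x n) (A j (x n)) : ℂ)) atTop (nhds 0)) :
    ∀ z : Fin d → ℂ,
      opTupNorm A ^ 2 + ∑ j, ‖z j‖ ^ 2 ≤
        opTupNorm (fun j => A j - z j • (1 : H →L[ℂ] H)) ^ 2 := by
  intro z
  set B := fun j => A j - z j • (1 : H →L[ℂ] H) with hB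
  have hbound : ∀ n, ∑ j, ‖B j (x n)‖ ^ 2 ≤ opTupNorm B ^ 2 :=
    fun n => aux_sum_sq_le B (x n) (hx n)
  -- pointwise expansion
  have hexp : ∀ n, ∑ j, ‖B j (x n)‖ ^ 2 =
      (∑ j, ‖A j (x n)‖ ^ 2) - 2 * (∑ j, (z j * (inner ℂ (A j (x n)) (x n) : ℂ)).re)
        + ∑ j, ‖z j‖ ^ 2 := by
    intro n
    rw [Finset.mul_sum, ← Finset.sum_sub_distrib, ← Finset.sum_add_distrib]
    refine Finset.sum_congr rfl fun j _ => ?_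
    have : B j (x n) = A j (x n) - z j • x n := by
      simp [hB, ContinuousLinearMap.sub_apply]
    rw [this, @norm_sub_sq ℂ, inner_smul_right, norm_smul, hx n]
    simp
  have hA2 : Tendsto (fun n => ∑ j, ‖A j (x n)‖ ^ 2) atTop (nhds (opTupNorm A ^ 2)) := by
    have h := hnorm.pow 2
    convert h using 2 with n
    rw [Real.sq_sqrt (Finset.sum_nonneg fun j _ => sq_nonneg _)]
  have hcross : Tendsto (fun n => ∑ j, (z j * (inner ℂ (A j (x n)) (x n) : ℂ)).re)
      atTop (nhds 0) := by
    have : ∀ j : Fin d, Tendsto (fun n => (z j * (inner ℂ (A j (x n)) (x n) : ℂ)).re)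
        atTop (nhds 0) := by
      intro j
      have h1 : Tendsto (fun n => (inner ℂ (A j (x n)) (x n) : ℂ)) atTop (nhds 0) := by
        have := (hinner j).star
        simp only [star_zero] at this
        convert this using 2 with n
        rw [← inner_conj_symm]
        rfl
      have h2 := h1.const_mul (z j)
      rw [mul_zero] at h2
      have := (Complex.continuous_re.tendsto 0).comp h2
      simpa only [Complex.zero_re, Function.comp_def] using this
    have := tendsto_finset_sum Finset.univ (fun j _ => this j)
    simpa using this
  have htend : Tendsto (fun n => ∑ j, ‖B j (x n)‖ ^ 2) atTop
      (nhds (opTupNorm A ^ 2 + ∑ j, ‖z j‖ ^ 2)) := by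
    have := (hA2.sub (hcross.const_mul 2)).add
      (tendsto_const_nhds (x := ∑ j, ‖z j‖ ^ 2) (f := atTop))
    simp only [mul_zero, sub_zero] at this
    exact Tendsto.congr (fun n => (hexp n).symm) this
  exact le_of_tendsto htend (Eventually.of_forall hbound)
end

section
/- Let A = (A_1, A_2) with A_1 = [[1,0],[0,0]] and A_2 = [[0,0],[1,0]]. Then dist(A, C²I)² = 1, attained uniquely at z⁰ = (1, 0), and max_{‖x‖=1} var_x(A) = 1 = dist(A, C²I)², even though W₀(A⁰) = { (−|z_2|², z_2 \overline{z_1}) : |z_1|² + |z_2|² = 1 } is not convex. -/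
open Matrix

/-- For matrix tuples, `W₀(A) = 𝒱(A) = { (⟨x,A₁x⟩,…) : ‖x‖ = 1, A*A x = ‖A‖² x }`. -/
def VSet {n : Type*} [Fintype n] [DecidableEq n] {d : ℕ}
    (A : Fin d → Matrix n n ℂ) : Set (Fin d → ℂ) :=
  {v | ∃ x : n → ℂ, star x ⬝ᵥ x = 1 ∧
    (∑ j, (A j)ᴴ * A j).mulVec x = ((tupNorm A : ℂ) ^ 2) • x ∧
    v = fun j => star x ⬝ᵥ (A j).mulVec x}

/-! ### Auxiliary lemmas -/

lemma aux_matOpNorm_one : matOpNorm (1 : Matrix (Fin 2) (Fin 2) ℂ) = 1 := by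
  rw [matOpNorm, _root_.map_one]
  exact norm_one

lemma aux_matOpNorm_mulVec_le {n : Type*} [Fintype n] [DecidableEq n]
    (M : Matrix n n ℂ) (x : n → ℂ) :
    ‖((WithLp.equiv 2 _).symm (M.mulVec x) : EuclideanSpace ℂ n)‖
      ≤ matOpNorm M * ‖((WithLp.equiv 2 _).symm x : EuclideanSpace ℂ n)‖ := by
  have h : ((WithLp.equiv 2 _).symm (M.mulVec x) : EuclideanSpace ℂ n)
      = toEuclideanCLM (𝕜 := ℂ) M ((WithLp.equiv _ _).symm x) := by
    rfl
  rw [h, matOpNorm]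
  exact ContinuousLinearMap.le_opNorm _ _

lemma aux_euclid_norm_pair (a b : ℂ) :
    ‖((WithLp.equiv 2 _).symm (![a, b]) : EuclideanSpace ℂ (Fin 2))‖
      = Real.sqrt (‖a‖ ^ 2 + ‖b‖ ^ 2) := by
  rw [EuclideanSpace.norm_eq]
  simp [Fin.sum_univ_two]

set_option linter.unreachableTactic false in
set_option linter.unusedTactic false in
lemma aux_key (z : Fin 2 → ℂ) :
    Complex.normSq (1 - z 0) + Complex.normSq (z 1) + 1 ≤
      matOpNorm (∑ j, ((![!![1,0;0,0],!![0,0;1,0]] : Fin 2 → Matrix (Fin 2) (Fin 2) ℂ) j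
        - z j • 1)ᴴ * ((![!![1,0;0,0],!![0,0;1,0]] : Fin 2 → Matrix (Fin 2) (Fin 2) ℂ) j - z j • 1)) := by
  set d : ℝ := Complex.normSq (1 - z 0) + Complex.normSq (z 1) + 1 with hd
  have hd0 : 0 ≤ d :=
    add_nonneg (add_nonneg (Complex.normSq_nonneg _) (Complex.normSq_nonneg _)) zero_le_one
  set S := (∑ j, ((![!![1,0;0,0],!![0,0;1,0]] : Fin 2 → Matrix (Fin 2) (Fin 2) ℂ) j
        - z j • 1)ᴴ * ((![!![1,0;0,0],!![0,0;1,0]] : Fin 2 → Matrix (Fin 2) (Fin 2) ℂ) j - z j • 1)) with hSdef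
  have hS : S = !![(1 - z 0) * star (1 - z 0) + z 1 * star (z 1) + 1, -(z 1);
       -star (z 1), z 0 * star (z 0) + z 1 * star (z 1)] := by
    rw [hSdef]
    ext i j
    fin_cases i <;> fin_cases j <;>
      simp [Fin.sum_univ_two, Matrix.mul_apply, Matrix.one_apply] <;> ring
  have hmv : S.mulVec ![1, 0] = ![(d : ℂ), -star (z 1)] := by
    rw [hS]
    funext i
    fin_cases i <;>
      simp only [Matrix.mulVec, dotProduct, Fin.sum_univ_two, hd, Complex.ofReal_add,
        Complex.ofReal_one, ← Complex.mul_conj, Complex.star_def, Matrix.cons_val_zero,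
        Matrix.cons_val_one, Matrix.head_cons, Matrix.cons_val', Matrix.empty_val',
        Matrix.cons_val_fin_one] <;> simp <;> ring
  have h1 : ‖((WithLp.equiv 2 _).symm (![(1:ℂ), 0]) : EuclideanSpace ℂ (Fin 2))‖ = 1 := by
    rw [aux_euclid_norm_pair]; simp
  have h2 := aux_matOpNorm_mulVec_le S ![1, 0]
  rw [hmv, h1, mul_one, aux_euclid_norm_pair] at h2
  refine le_trans ?_ h2
  have habs : ‖(d : ℂ)‖ = d := by
    rw [Complex.norm_real, Real.norm_eq_abs, abs_of_nonneg hd0]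
  calc d = Real.sqrt (d ^ 2) := by rw [Real.sqrt_sq hd0]
    _ ≤ _ := by
        apply Real.sqrt_le_sqrt
        rw [habs]
        exact le_add_of_nonneg_right (by positivity)

lemma aux_normsum (x : Fin 2 → ℂ) (hx : star x ⬝ᵥ x = 1) :
    Complex.normSq (x 0) + Complex.normSq (x 1) = 1 := by
  have := congrArg Complex.re hx
  simpa [dotProduct, Fin.sum_univ_two, Complex.add_re,
    ← Complex.normSq_eq_conj_mul_self] using this

lemma aux_matVar_eq (x : Fin 2 → ℂ) (hx : star x ⬝ᵥ x = 1) :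
    matVar (![!![1,0;0,0],!![0,0;1,0]] : Fin 2 → Matrix (Fin 2) (Fin 2) ℂ) x
      = Complex.normSq (x 0) := by
  have hn := aux_normsum x hx
  simp only [matVar, vecNormSq, Fin.sum_univ_two, dotProduct, Matrix.mulVec,
    Matrix.cons_val_zero, Matrix.cons_val_one, Matrix.head_cons]
  simp [dotProduct, Fin.sum_univ_two, ← Complex.normSq_eq_conj_mul_self,
    _root_.map_mul, mul_pow, Complex.sq_norm]
  linear_combination (-(Complex.normSq (x 0))) * hn

lemma aux_sum_A0 :
    (∑ j, ((fun j => (![!![1,0;0,0],!![0,0;1,0]] : Fin 2 → Matrix (Fin 2) (Fin 2) ℂ) j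
        - (![1,0] : Fin 2 → ℂ) j • 1) j)ᴴ *
      ((fun j => (![!![1,0;0,0],!![0,0;1,0]] : Fin 2 → Matrix (Fin 2) (Fin 2) ℂ) j
        - (![1,0] : Fin 2 → ℂ) j • 1) j)) = (1 : Matrix (Fin 2) (Fin 2) ℂ) := by
  ext i j
  fin_cases i <;> fin_cases j <;>
    simp [Fin.sum_univ_two, Matrix.mul_apply, Matrix.one_apply]

theorem nonconvex_W0_example :
    let A : Fin 2 → Matrix (Fin 2) (Fin 2) ℂ := ![!![1, 0; 0, 0], !![0, 0; 1, 0]]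
    let A0 : Fin 2 → Matrix (Fin 2) (Fin 2) ℂ :=
      fun j => A j - (![1, 0] : Fin 2 → ℂ) j • (1 : Matrix (Fin 2) (Fin 2) ℂ)
    (∀ z : Fin 2 → ℂ,
        1 ≤ tupNorm (fun j => A j - z j • (1 : Matrix (Fin 2) (Fin 2) ℂ))) ∧
    tupNorm A0 = 1 ∧
    (∀ z : Fin 2 → ℂ,
        tupNorm (fun j => A j - z j • (1 : Matrix (Fin 2) (Fin 2) ℂ)) = 1 →
          z = ![1, 0]) ∧
    IsGreatest {v : ℝ | ∃ x : Fin 2 → ℂ, star x ⬝ᵥ x = 1 ∧ v = matVar A x} 1 ∧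
    VSet A0 = {v : Fin 2 → ℂ | ∃ z1 z2 : ℂ,
        ‖z1‖ ^ 2 + ‖z2‖ ^ 2 = 1 ∧
        v = ![((-(‖z2‖ ^ 2) : ℝ) : ℂ), z2 * (starRingEnd ℂ) z1]} ∧
    ¬ Convex ℝ (VSet A0) := by
  intro A A0
  have hA : A = ![!![1, 0; 0, 0], !![0, 0; 1, 0]] := rfl
  have hA0 : A0 = fun j => (![!![1,0;0,0],!![0,0;1,0]] : Fin 2 → Matrix (Fin 2) (Fin 2) ℂ) j
      - (![1,0] : Fin 2 → ℂ) j • 1 := rfl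
  -- Part 1
  have part1 : ∀ z : Fin 2 → ℂ,
      1 ≤ tupNorm (fun j => A j - z j • (1 : Matrix (Fin 2) (Fin 2) ℂ)) := by
    intro z
    have hk := aux_key z
    have h1 : (1:ℝ) ≤ matOpNorm (∑ j, ((fun j => A j - z j • (1 : Matrix (Fin 2) (Fin 2) ℂ)) j)ᴴ *
        ((fun j => A j - z j • (1 : Matrix (Fin 2) (Fin 2) ℂ)) j)) := by
      rw [hA]
      refine le_trans ?_ hk
      nlinarith [Complex.normSq_nonneg (1 - z 0), Complex.normSq_nonneg (z 1)]
    calc (1:ℝ) = Real.sqrt 1 := (Real.sqrt_one).symm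
      _ ≤ _ := Real.sqrt_le_sqrt h1
  -- Part 2
  have part2 : tupNorm A0 = 1 := by
    rw [tupNorm, hA0, aux_sum_A0, aux_matOpNorm_one, Real.sqrt_one]
  -- Part 3
  have part3 : ∀ z : Fin 2 → ℂ,
      tupNorm (fun j => A j - z j • (1 : Matrix (Fin 2) (Fin 2) ℂ)) = 1 → z = ![1, 0] := by
    intro z hz
    have hk := aux_key z
    rw [tupNorm] at hz
    have hnn : 0 ≤ matOpNorm (∑ j, ((fun j => A j - z j • (1 : Matrix (Fin 2) (Fin 2) ℂ)) j)ᴴ *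
        ((fun j => A j - z j • (1 : Matrix (Fin 2) (Fin 2) ℂ)) j)) := norm_nonneg _
    have heq : matOpNorm (∑ j, ((fun j => A j - z j • (1 : Matrix (Fin 2) (Fin 2) ℂ)) j)ᴴ *
        ((fun j => A j - z j • (1 : Matrix (Fin 2) (Fin 2) ℂ)) j)) = 1 := by
      have h' := Real.sq_sqrt hnn
      rw [hz] at h'
      simpa using h'.symm
    rw [hA] at heq
    rw [heq] at hk
    have h0 : Complex.normSq (1 - z 0) = 0 ∧ Complex.normSq (z 1) = 0 := by
      constructor <;>
        nlinarith [Complex.normSq_nonneg (1 - z 0), Complex.normSq_nonneg (z 1)]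
    have hz0 : z 0 = 1 := by
      have := Complex.normSq_eq_zero.mp h0.1
      linear_combination -this
    have hz1 : z 1 = 0 := Complex.normSq_eq_zero.mp h0.2
    funext i
    fin_cases i <;> simp [hz0, hz1]
  -- Part 4
  have part4 : IsGreatest {v : ℝ | ∃ x : Fin 2 → ℂ, star x ⬝ᵥ x = 1 ∧ v = matVar A x} 1 := by
    constructor
    · refine ⟨![1, 0], by simp [dotProduct, Fin.sum_univ_two], ?_⟩
      rw [hA, aux_matVar_eq ![1,0] (by simp [dotProduct, Fin.sum_univ_two])]
      simp
    · rintro v ⟨x, hx, rfl⟩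
      rw [hA, aux_matVar_eq x hx]
      have hn := aux_normsum x hx
      nlinarith [Complex.normSq_nonneg (x 1)]
  -- Part 5
  have part5 : VSet A0 = {v : Fin 2 → ℂ | ∃ z1 z2 : ℂ,
      ‖z1‖ ^ 2 + ‖z2‖ ^ 2 = 1 ∧
      v = ![((-(‖z2‖ ^ 2) : ℝ) : ℂ), z2 * (starRingEnd ℂ) z1]} := by
    have hsum : (∑ j, (A0 j)ᴴ * A0 j) = (1 : Matrix (Fin 2) (Fin 2) ℂ) := by
      rw [hA0]; exact aux_sum_A0
    ext v
    simp only [VSet, Set.mem_setOf_eq]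
    constructor
    · rintro ⟨x, hx, -, rfl⟩
      refine ⟨(starRingEnd ℂ) (x 0), (starRingEnd ℂ) (x 1), ?_, ?_⟩
      · have hn := aux_normsum x hx
        simpa [Complex.sq_norm, Complex.normSq_conj] using hn
      · funext j
        fin_cases j <;>
          simp [hA0, Matrix.mulVec, dotProduct, Fin.sum_univ_two, Matrix.one_apply,
            Complex.sq_norm, Complex.normSq_eq_conj_mul_self] <;> ring
    · rintro ⟨z1, z2, h, rfl⟩
      refine ⟨![(starRingEnd ℂ) z1, (starRingEnd ℂ) z2], ?_, ?_, ?_⟩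
      · simp only [dotProduct, Fin.sum_univ_two, Pi.star_apply, Matrix.cons_val_zero,
          Matrix.cons_val_one, Matrix.head_cons, RCLike.star_def, RingHomCompTriple.comp_apply,
          Complex.star_def, RingHom.id_apply, starRingEnd_self_apply]
        rw [Complex.mul_conj, Complex.mul_conj]
        rw [← Complex.sq_norm, ← Complex.sq_norm]
        exact_mod_cast h
      · have hone : ((A0 0)ᴴ * A0 0 + (A0 1)ᴴ * A0 1) = (1 : Matrix (Fin 2) (Fin 2) ℂ) := by
          rw [← hsum, Fin.sum_univ_two]
        rw [Fin.sum_univ_two, hone, part2]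
        simp
      · funext j
        fin_cases j <;>
          simp [hA0, Matrix.mulVec, dotProduct, Fin.sum_univ_two, Matrix.one_apply,
            Complex.sq_norm, Complex.normSq_eq_conj_mul_self] <;> ring
  -- Part 6
  have part6 : ¬ Convex ℝ (VSet A0) := by
    intro hconv
    have hp0 : (![(0:ℂ), 0]) ∈ VSet A0 := by
      rw [part5]
      refine ⟨1, 0, by simp, ?_⟩
      funext j; fin_cases j <;> simp
    have hp1 : (![(-1:ℂ), 0]) ∈ VSet A0 := by
      rw [part5]
      refine ⟨0, 1, by simp, ?_⟩
      funext j; fin_cases j <;> simp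
    have hm := hconv hp0 hp1 (by norm_num : (0:ℝ) ≤ 1/2) (by norm_num : (0:ℝ) ≤ 1/2)
      (by norm_num)
    rw [part5] at hm
    obtain ⟨z1, z2, h, hv⟩ := hm
    have h0 := congrFun hv 0
    have h1 := congrFun hv 1
    simp [Pi.smul_apply, Complex.real_smul] at h0 h1
    have habs2 : ‖z2‖ ^ 2 = 2⁻¹ := by
      have h' : ((‖z2‖ ^ 2 : ℝ) : ℂ) = ((2⁻¹ : ℝ) : ℂ) := by
        push_cast
        linear_combination -h0
      exact_mod_cast h'
    rcases h1 with h2 | h2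
    · rw [h2] at habs2
      simp at habs2
    · have hz1 : ‖z1‖ = 0 := by rw [h2]; simp
      rw [hz1] at h
      norm_num at h
      rcases h with h | h <;> rw [h] at habs2 <;> norm_num at habs2
  exact ⟨part1, part2, part3, part4, part5, part6⟩
end
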